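/- Let A be an n×n Z-matrix with unit diagonal, A = I - L - U as above, and let P̃ = I + L(α) + U(α) with α_ij ∈ [0,1] for i ≠ j. Then A is an M-matrix if and only if à = P̃A is an M-matrix. -/

import Mathlib

open Matrix BigOperators Finset

/-- Spectral radius of a real matrix: supremum of norms of its complex eigenvalues. -/
noncomputable def specRad {n : ℕ} (A : Matrix (Fin n) (Fin n) ℝ) : ℝ :=
  sSup ((fun μ : ℂ => ‖μ‖) '' spectrum ℂ (A.map (algebraMap ℝ ℂ)))

/-- A Z-matrix has nonpositive off-diagonal entries. -/
def IsZMatrix {n : ℕ} (A : Matrix (Fin n) (Fin n) ℝ) : Prop :=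
  ∀ i j, i ≠ j → A i j ≤ 0

/-- An M-matrix is a nonsingular Z-matrix with entrywise nonnegative inverse. -/
def IsMMatrix {n : ℕ} (A : Matrix (Fin n) (Fin n) ℝ) : Prop :=
  IsZMatrix A ∧ IsUnit A.det ∧ ∀ i j, 0 ≤ A⁻¹ i j

/-- `-L`: the strictly lower triangular part of `A` (so `lowerPart A ≥ 0` for a Z-matrix). -/
def lowerPart {n : ℕ} (A : Matrix (Fin n) (Fin n) ℝ) : Matrix (Fin n) (Fin n) ℝ :=
  Matrix.of fun i j => if (j : ℕ) < (i : ℕ) then -A i j else 0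

/-- `-U`: the strictly upper triangular part of `A`. -/
def upperPart {n : ℕ} (A : Matrix (Fin n) (Fin n) ℝ) : Matrix (Fin n) (Fin n) ℝ :=
  Matrix.of fun i j => if (i : ℕ) < (j : ℕ) then -A i j else 0

/-- Diagonal part of `A`. -/
def diagPart {n : ℕ} (A : Matrix (Fin n) (Fin n) ℝ) : Matrix (Fin n) (Fin n) ℝ :=
  Matrix.of fun i j => if i = j then A i j else 0

/-- The preconditioner `P̃ = I + L(α) + U(α)`: unit diagonal, off-diagonal entries `-α_ij a_ij`. -/
def precond {n : ℕ} (α : Fin n → Fin n → ℝ) (A : Matrix (Fin n) (Fin n) ℝ) :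
    Matrix (Fin n) (Fin n) ℝ :=
  Matrix.of fun i j => if i = j then 1 else -(α i j) * A i j

/-- AOR iteration matrix of `B = D_B - L_B - U_B`:
`(D_B - γ L_B)⁻¹ [(1-ω) D_B + (ω-γ) L_B + ω U_B]`. -/
noncomputable def aorMatrix {n : ℕ} (B : Matrix (Fin n) (Fin n) ℝ) (γ ω : ℝ) :
    Matrix (Fin n) (Fin n) ℝ :=
  (diagPart B - γ • lowerPart B)⁻¹ *
    ((1 - ω) • diagPart B + (ω - γ) • lowerPart B + ω • upperPart B)

/-- Irreducibility: the directed graph with an edge `i → j` whenever `A i j ≠ 0`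
is strongly connected. -/
def IsIrreducibleMat {n : ℕ} (A : Matrix (Fin n) (Fin n) ℝ) : Prop :=
  ∀ i j : Fin n, Relation.ReflTransGen (fun a b => A a b ≠ 0) i j


lemma entry_mul_nonneg {n : ℕ} {A B : Matrix (Fin n) (Fin n) ℝ}
    (hA : ∀ i j, 0 ≤ A i j) (hB : ∀ i j, 0 ≤ B i j) : ∀ i j, 0 ≤ (A * B) i j := by
  intro i j
  rw [Matrix.mul_apply]
  exact Finset.sum_nonneg fun k _ => mul_nonneg (hA i k) (hB k j)

lemma entry_pow_nonneg {n : ℕ} {A : Matrix (Fin n) (Fin n) ℝ}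
    (hA : ∀ i j, 0 ≤ A i j) : ∀ (k : ℕ) (i j : Fin n), 0 ≤ (A ^ k) i j := by
  intro k
  induction k with
  | zero =>
      intro i j
      rw [pow_zero]
      rw [Matrix.one_apply]
      split <;> norm_num
  | succ m ih =>
      rw [pow_succ]
      exact entry_mul_nonneg ih hA

section KeyLemma
attribute [local instance] Matrix.linftyOpNormedAddCommGroup Matrix.linftyOpNormedRing
  Matrix.linftyOpNormedAlgebra

lemma key_mmatrix {n : ℕ} (B : Matrix (Fin n) (Fin n) ℝ)
    (hZ : ∀ i j, i ≠ j → B i j ≤ 0) (x : Fin n → ℝ) (hx : ∀ i, 0 < x i)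
    (hBx : ∀ i, 0 < (B *ᵥ x) i) : IsUnit B.det ∧ ∀ i j, 0 ≤ B⁻¹ i j := by
  classical
  -- diagonal entries are positive
  have hdiagpos : ∀ i, 0 < B i i * x i := by
    intro i
    have h1 : (B *ᵥ x) i = ∑ j, B i j * x j := by
      simp [Matrix.mulVec, dotProduct]
    have h2 : ∑ j, B i j * x j = B i i * x i + ∑ j ∈ Finset.univ.erase i, B i j * x j :=
      (Finset.add_sum_erase _ _ (Finset.mem_univ i)).symm
    have h3 : ∑ j ∈ Finset.univ.erase i, B i j * x j ≤ 0 :=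
      Finset.sum_nonpos fun j hj =>
        mul_nonpos_of_nonpos_of_nonneg (hZ i j (Ne.symm (Finset.ne_of_mem_erase hj))) (hx j).le
    have := hBx i
    rw [h1, h2] at this
    linarith
  set d : Fin n → ℝ := fun i => B i i * x i with hd
  have hdne : ∀ i, d i ≠ 0 := fun i => (hdiagpos i).ne'
  set J : Matrix (Fin n) (Fin n) ℝ :=
    Matrix.of (fun i j => if i = j then 0 else (-(B i j) * x j) / d i) with hJ
  have hJnonneg : ∀ i j, 0 ≤ J i j := by
    intro i j
    simp only [hJ, Matrix.of_apply]
    split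
    · exact le_refl 0
    · next h =>
      apply div_nonneg _ (hdiagpos i).le
      exact mul_nonneg (by linarith [hZ i j h]) (hx j).le
  -- row sums of J are < 1
  have hrow : ∀ i, ∑ j, J i j < 1 := by
    intro i
    have hdapp : d i = B i i * x i := rfl
    have hJii : J i i = 0 := by simp [hJ]
    have hsum : ∑ j, J i j = (∑ j ∈ Finset.univ.erase i, (-(B i j) * x j)) / d i := by
      rw [Finset.sum_div, ← Finset.sum_erase Finset.univ hJii]
      apply Finset.sum_congr rfl
      intro j hj
      simp [hJ, (Finset.ne_of_mem_erase hj : j ≠ i).symm]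
    have hBxi : (B *ᵥ x) i = d i - ∑ j ∈ Finset.univ.erase i, (-(B i j) * x j) := by
      have h1 : (B *ᵥ x) i = ∑ j, B i j * x j := by simp [Matrix.mulVec, dotProduct]
      have h2 : ∑ j, B i j * x j = B i i * x i + ∑ j ∈ Finset.univ.erase i, B i j * x j :=
        (Finset.add_sum_erase _ _ (Finset.mem_univ i)).symm
      have h3 : ∑ j ∈ Finset.univ.erase i, (-(B i j) * x j)
          = -∑ j ∈ Finset.univ.erase i, B i j * x j := by
        rw [← Finset.sum_neg_distrib]
        exact Finset.sum_congr rfl fun j _ => by ring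
      rw [h1, h2, h3, hdapp]
      ring
    rw [hsum]
    rw [div_lt_one (hdiagpos i)]
    have := hBx i
    rw [hBxi] at this
    rw [hdapp] at this
    linarith
  -- norm of J is < 1
  have hJnorm : ‖J‖ < 1 := by
    rw [Matrix.linfty_opNorm_def]
    have : (Finset.univ : Finset (Fin n)).sup (fun i => ∑ j, ‖J i j‖₊) < 1 := by
      rw [Finset.sup_lt_iff (by norm_num : (⊥ : NNReal) < 1)]
      intro i _
      rw [← NNReal.coe_lt_coe]
      push_cast
      have : ∀ j, (‖J i j‖₊ : ℝ) = J i j := fun j => by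
        rw [coe_nnnorm, Real.norm_of_nonneg (hJnonneg i j)]
      calc ∑ j, (‖J i j‖₊ : ℝ) = ∑ j, J i j := Finset.sum_congr rfl fun j _ => this j
        _ < 1 := hrow i
    exact_mod_cast this
  -- (1 - J) is invertible with nonnegative inverse (Neumann series)
  have hUnit1J : IsUnit ((1 : Matrix (Fin n) (Fin n) ℝ) - J) :=
    isUnit_one_sub_of_norm_lt_one hJnorm
  have hgeom : (∑' k : ℕ, J ^ k) = Ring.inverse (1 - J) := geom_series_eq_inverse J hJnorm
  have hsummable : Summable (fun k : ℕ => J ^ k) := summable_geometric_of_norm_lt_one hJnorm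
  have hinv1J : ∀ i j, 0 ≤ ((1 - J)⁻¹ : Matrix (Fin n) (Fin n) ℝ) i j := by
    intro i j
    rw [Matrix.nonsing_inv_eq_ringInverse, ← hgeom]
    let L : Matrix (Fin n) (Fin n) ℝ →ₗ[ℝ] ℝ :=
      { toFun := fun M => M i j, map_add' := fun _ _ => rfl, map_smul' := fun _ _ => rfl }
    have hmap : L (∑' k : ℕ, J ^ k) = ∑' k : ℕ, L (J ^ k) :=
      (L.toContinuousLinearMap).map_tsum hsummable
    have : (∑' k : ℕ, J ^ k) i j = ∑' k : ℕ, (J ^ k) i j := hmap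
    rw [this]
    exact tsum_nonneg fun k => entry_pow_nonneg hJnonneg k i j
  -- factorization B * diag x = diag d * (1 - J)
  have hEq : B * Matrix.diagonal x = Matrix.diagonal d * (1 - J) := by
    ext i j
    rw [Matrix.mul_diagonal, Matrix.diagonal_mul]
    by_cases h : i = j
    · subst h
      simp [hJ, Matrix.sub_apply, Matrix.one_apply]
      rfl
    · rw [Matrix.sub_apply, Matrix.one_apply_ne h]
      simp only [hJ, Matrix.of_apply, if_neg h]
      have h2 : (0:ℝ) - -B i j * x j / d i = B i j * x j / d i := by ring
      rw [h2, mul_div_assoc', mul_div_cancel_left₀ _ (hdne i)]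
  have hdetx : (Matrix.diagonal x).det ≠ 0 := by
    rw [Matrix.det_diagonal]
    exact Finset.prod_ne_zero_iff.mpr fun i _ => (hx i).ne'
  have hdetd : IsUnit (Matrix.diagonal d).det := by
    rw [Matrix.det_diagonal]
    exact isUnit_iff_ne_zero.mpr (Finset.prod_ne_zero_iff.mpr fun i _ => hdne i)
  have hdet1J : IsUnit ((1 : Matrix (Fin n) (Fin n) ℝ) - J).det :=
    (Matrix.isUnit_iff_isUnit_det _).mp hUnit1J
  have hdetB : IsUnit B.det := by
    have hdd := congrArg Matrix.det hEq
    rw [Matrix.det_mul, Matrix.det_mul] at hdd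
    refine isUnit_iff_ne_zero.mpr fun h0 => ?_
    rw [h0, zero_mul] at hdd
    exact (hdetd.mul hdet1J).ne_zero hdd.symm
  have hdinv : (Matrix.diagonal d)⁻¹ = Matrix.diagonal (fun i => (d i)⁻¹) := by
    apply Matrix.inv_eq_right_inv
    rw [Matrix.diagonal_mul_diagonal]
    have h3 : (fun i => d i * (d i)⁻¹) = fun _ => (1:ℝ) :=
      funext fun i => mul_inv_cancel₀ (hdne i)
    rw [h3]
    exact Matrix.diagonal_one
  have hBinv : B⁻¹ = Matrix.diagonal x * ((1 - J)⁻¹ * (Matrix.diagonal d)⁻¹) := by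
    have h1 : B = Matrix.diagonal d * (1 - J) * (Matrix.diagonal x)⁻¹ := by
      rw [← hEq, Matrix.mul_assoc, Matrix.mul_nonsing_inv _ (isUnit_iff_ne_zero.mpr hdetx),
        Matrix.mul_one]
    rw [h1, Matrix.mul_inv_rev, Matrix.mul_inv_rev,
      Matrix.nonsing_inv_nonsing_inv _ (isUnit_iff_ne_zero.mpr hdetx)]
  refine ⟨hdetB, fun i j => ?_⟩
  rw [hBinv]
  refine entry_mul_nonneg (fun i j => ?_) (entry_mul_nonneg hinv1J (fun i j => ?_)) i j
  · rw [Matrix.diagonal_apply]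
    split
    · exact (hx _).le
    · exact le_refl 0
  · rw [hdinv, Matrix.diagonal_apply]
    split
    · exact inv_nonneg.mpr (hdiagpos _).le
    · exact le_refl 0

end KeyLemma

/-- With `A` a Z-matrix with unit diagonal and `α_ij ∈ [0,1]`,
`A` is an M-matrix iff `Ã = P̃A` is an M-matrix. -/
theorem stmt6 {n : ℕ} (A : Matrix (Fin n) (Fin n) ℝ) (hZ : IsZMatrix A)
    (hdiag : ∀ i, A i i = 1) (α : Fin n → Fin n → ℝ)
    (hα : ∀ i j, i ≠ j → α i j ∈ Set.Icc (0 : ℝ) 1) :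
    IsMMatrix A ↔ IsMMatrix (precond α A * A) := by
  unfold IsMMatrix
  classical
  have hPnonneg : ∀ i j, 0 ≤ precond α A i j := by
    intro i j
    simp only [precond, Matrix.of_apply]
    split
    · norm_num
    · next h => nlinarith [(hα i j h).1, hZ i j h, (hα i j h).2]
  have hPdiag : ∀ i, precond α A i i = 1 := by
    intro i; simp [precond]
  -- Ã is a Z-matrix
  have hZt : IsZMatrix (precond α A * A) := by
    intro i j hij
    rw [Matrix.mul_apply]
    have e1 : ∑ k, precond α A i k * A k j
        = precond α A i j * A j j + ∑ k ∈ Finset.univ.erase j, precond α A i k * A k j :=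
      (Finset.add_sum_erase _ _ (Finset.mem_univ j)).symm
    have hij' : i ∈ Finset.univ.erase j := Finset.mem_erase.mpr ⟨hij, Finset.mem_univ i⟩
    have e2 : ∑ k ∈ Finset.univ.erase j, precond α A i k * A k j
        = precond α A i i * A i j
          + ∑ k ∈ (Finset.univ.erase j).erase i, precond α A i k * A k j :=
      (Finset.add_sum_erase _ _ hij').symm
    have hrest : ∑ k ∈ (Finset.univ.erase j).erase i, precond α A i k * A k j ≤ 0 := by
      apply Finset.sum_nonpos
      intro k hk
      have hki : k ≠ i := (Finset.mem_erase.mp hk).1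
      have hkj : k ≠ j := (Finset.mem_erase.mp (Finset.mem_erase.mp hk).2).1
      exact mul_nonpos_of_nonneg_of_nonpos (hPnonneg i k) (hZ k j hkj)
    have hmain : precond α A i j * A j j + precond α A i i * A i j ≤ 0 := by
      rw [hPdiag i, hdiag j, one_mul, mul_one]
      have : precond α A i j = -(α i j) * A i j := by
        simp [precond, hij]
      rw [this]
      nlinarith [hZ i j hij, (hα i j hij).1, (hα i j hij).2]
    rw [e1, e2]
    linarith
  constructor
  · rintro ⟨-, hdetA, hinv⟩
    -- the positive vector x = A⁻¹ 1
    set x : Fin n → ℝ := A⁻¹ *ᵥ (fun _ => (1:ℝ)) with hx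
    have hxnn : ∀ i, 0 ≤ x i := by
      intro i
      simp only [hx, Matrix.mulVec, dotProduct]
      exact Finset.sum_nonneg fun j _ => by simpa using hinv i j
    have hxpos : ∀ i, 0 < x i := by
      intro i
      rcases lt_or_eq_of_le (hxnn i) with h | h
      · exact h
      · exfalso
        have hall : ∀ j ∈ Finset.univ, A⁻¹ i j * 1 = 0 := by
          rw [← Finset.sum_eq_zero_iff_of_nonneg (fun j _ => by simpa using hinv i j)]
          simp only [hx, Matrix.mulVec, dotProduct] at h
          exact h.symm
        have hrow : ∀ j, A⁻¹ i j = 0 := fun j => by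
          have := hall j (Finset.mem_univ j); simpa using this
        have h1 : (A⁻¹ * A) i i = 0 := by
          rw [Matrix.mul_apply]
          exact Finset.sum_eq_zero fun k _ => by rw [hrow k, zero_mul]
        rw [Matrix.nonsing_inv_mul _ hdetA, Matrix.one_apply_eq] at h1
        exact one_ne_zero h1
    have hAx : A *ᵥ x = fun _ => (1:ℝ) := by
      rw [hx, Matrix.mulVec_mulVec, Matrix.mul_nonsing_inv _ hdetA, Matrix.one_mulVec]
    have hPAx : ∀ i, 0 < ((precond α A * A) *ᵥ x) i := by
      intro i
      rw [← Matrix.mulVec_mulVec, hAx]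
      have : (precond α A *ᵥ fun _ => (1:ℝ)) i = ∑ k, precond α A i k := by
        simp [Matrix.mulVec, dotProduct]
      rw [this]
      calc (0:ℝ) < 1 := one_pos
        _ = precond α A i i := (hPdiag i).symm
        _ ≤ ∑ k, precond α A i k :=
          Finset.single_le_sum (fun k _ => hPnonneg i k) (Finset.mem_univ i)
    obtain ⟨h1, h2⟩ := key_mmatrix (precond α A * A) hZt x hxpos hPAx
    exact ⟨hZt, h1, h2⟩
  · rintro ⟨-, hdet, hinv⟩
    rw [Matrix.det_mul] at hdet
    have hdetA : IsUnit A.det := isUnit_of_mul_isUnit_right hdet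
    have hdetP : IsUnit (precond α A).det := isUnit_of_mul_isUnit_left hdet
    have hAinv : A⁻¹ = (precond α A * A)⁻¹ * precond α A := by
      rw [Matrix.mul_inv_rev, Matrix.mul_assoc, Matrix.nonsing_inv_mul _ hdetP, Matrix.mul_one]
    refine ⟨hZ, hdetA, fun i j => ?_⟩
    rw [hAinv]
    have hdet' : IsUnit (precond α A * A).det := by rw [Matrix.det_mul]; exact hdet
    exact entry_mul_nonneg hinv hPnonneg i j
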